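/- Suppose (symmetric QSP existence in W-convention): for every real polynomial F of degree d with parity d mod 2 and |F(x)| ≤ 1 on [-1,1], there exist real polynomials G, Q and symmetric phases (φ₀,...,φ₀) ∈ ℝ^{d+1} such that e^{iφ₀Z}∏_{j=1}^d [W(x)e^{iφ_jZ}] has top-left entry F(x)+iG(x) and off-diagonal entries iQ(x)√(1-x²). Then for every real even polynomial F of degree d with |F(x)| ≤ 1 on [-1,1], there exist real polynomials G, Q and symmetric phases (φ₀,φ₁,...,φ₁,φ₀) ∈ ℝ^{d+1} such that U_Φ(x) = e^{iφ₀X}W_z*(x)e^{iφ₁X}W_z(x)···W_z(x)e^{iφ₀X} has both diagonal entries equal to F(x), top-right entry -Q(x)√(1-x²)+iG(x), and bottom-left entry Q(x)√(1-x²)+iG(x). -/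

import Mathlib

open Matrix Complex

/-- The QSP signal matrix `W(x) = e^{i·arccos(x)·X}`. -/
noncomputable def Wmat (x : ℝ) : Matrix (Fin 2) (Fin 2) ℂ :=
  !![(x : ℂ), Complex.I * (Real.sqrt (1 - x ^ 2) : ℝ);
     Complex.I * (Real.sqrt (1 - x ^ 2) : ℝ), (x : ℂ)]

/-- `W_z(x) = e^{i·arccos(x)·Z}`. -/
noncomputable def Wz (x : ℝ) : Matrix (Fin 2) (Fin 2) ℂ :=
  !![Complex.exp (Complex.I * (Real.arccos x : ℝ)), 0;
     0, Complex.exp (-(Complex.I * (Real.arccos x : ℝ)))]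

/-- `e^{iφZ}`. -/
noncomputable def expZ (φ : ℝ) : Matrix (Fin 2) (Fin 2) ℂ :=
  !![Complex.exp (Complex.I * (φ : ℝ)), 0; 0, Complex.exp (-(Complex.I * (φ : ℝ)))]

/-- `e^{iφX} = cos φ · I + i sin φ · X`. -/
noncomputable def expX (φ : ℝ) : Matrix (Fin 2) (Fin 2) ℂ :=
  !![(Real.cos φ : ℝ), Complex.I * (Real.sin φ : ℝ);
     Complex.I * (Real.sin φ : ℝ), (Real.cos φ : ℝ)]

/-- The QSP product in the `W`-convention:
`e^{iφ₀Z} ∏_{j=1}^d [W(x) e^{iφ_jZ}]`. -/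
noncomputable def qspW (d : ℕ) (φ : Fin (d + 1) → ℝ) (x : ℝ) : Matrix (Fin 2) (Fin 2) ℂ :=
  expZ (φ 0) * (List.ofFn fun j : Fin d => Wmat x * expZ (φ j.succ)).prod

/-- The QET-U product in the `W_z`-convention:
`e^{iφ₀X} W_z*(x) e^{iφ₁X} W_z(x) e^{iφ₂X} ⋯ e^{iφ_{d-1}X} W_z(x) e^{iφ_dX}`,
where `W_z*` occurs at the odd positions and `W_z` at the even positions. -/
noncomputable def qspWz (d : ℕ) (φ : Fin (d + 1) → ℝ) (x : ℝ) : Matrix (Fin 2) (Fin 2) ℂ :=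
  expX (φ 0) *
    (List.ofFn fun j : Fin d =>
      (if (j : ℕ) % 2 = 0 then (Wz x).map (starRingEnd ℂ) else Wz x) * expX (φ j.succ)).prod

/- ### auxiliary -/

noncomputable def A1 : Matrix (Fin 2) (Fin 2) ℂ := !![1, -1; 1, 1]
noncomputable def A2 : Matrix (Fin 2) (Fin 2) ℂ := !![1, 1; -1, 1]

theorem expX_mul (a b : ℝ) : expX a * expX b = expX (a + b) := by
  ext i j
  fin_cases i <;> fin_cases j
  · simp [expX, Matrix.mul_apply, Fin.sum_univ_two, Real.cos_add, Real.sin_add]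
    linear_combination (Complex.sin (a:ℂ) * Complex.sin (b:ℂ)) * Complex.I_sq
  · simp [expX, Matrix.mul_apply, Fin.sum_univ_two, Real.cos_add, Real.sin_add]
    ring
  · simp [expX, Matrix.mul_apply, Fin.sum_univ_two, Real.cos_add, Real.sin_add]
    ring
  · simp [expX, Matrix.mul_apply, Fin.sum_univ_two, Real.cos_add, Real.sin_add]
    linear_combination (Complex.sin (a:ℂ) * Complex.sin (b:ℂ)) * Complex.I_sq

theorem expZ_eq (t : ℝ) :
    expZ t = !![(Real.cos t : ℂ) + Complex.I * (Real.sin t : ℝ), 0;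
                0, (Real.cos t : ℂ) - Complex.I * (Real.sin t : ℝ)] := by
  have h1 : Complex.exp (Complex.I * (t : ℝ)) =
      (Real.cos t : ℂ) + Complex.I * (Real.sin t : ℝ) := by
    rw [mul_comm, Complex.exp_mul_I, ← Complex.ofReal_cos, ← Complex.ofReal_sin]; ring
  have h2 : Complex.exp (-(Complex.I * (t : ℝ))) =
      (Real.cos t : ℂ) - Complex.I * (Real.sin t : ℝ) := by
    rw [show -(Complex.I * (t:ℝ)) = (-(t:ℂ)) * Complex.I by ring, Complex.exp_mul_I,
      Complex.cos_neg, Complex.sin_neg, ← Complex.ofReal_cos, ← Complex.ofReal_sin]; ring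
  unfold expZ; rw [h1, h2]

theorem base_lemma (t : ℝ) : expX t = ((1:ℂ)/2) • (A1 * expZ t * A2) := by
  rw [expZ_eq]
  ext i j
  fin_cases i <;> fin_cases j <;>
    · simp [expX, A1, A2, Matrix.mul_apply, Fin.sum_univ_two]
      ring

theorem Wz_eq (x : ℝ) (hx : x ∈ Set.Icc (-1:ℝ) 1) :
    Wz x = !![(x:ℂ) + Complex.I * (Real.sqrt (1 - x^2) : ℝ), 0;
              0, (x:ℂ) - Complex.I * (Real.sqrt (1 - x^2) : ℝ)] := by
  have h1 : Complex.exp (Complex.I * (Real.arccos x : ℝ)) =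
      (x:ℂ) + Complex.I * (Real.sqrt (1 - x^2) : ℝ) := by
    rw [mul_comm, Complex.exp_mul_I, ← Complex.ofReal_cos, ← Complex.ofReal_sin,
      Real.cos_arccos hx.1 hx.2, Real.sin_arccos]; ring
  have h2 : Complex.exp (-(Complex.I * (Real.arccos x : ℝ))) =
      (x:ℂ) - Complex.I * (Real.sqrt (1 - x^2) : ℝ) := by
    rw [show -(Complex.I * (Real.arccos x : ℝ)) = (-((Real.arccos x : ℝ)):ℂ) * Complex.I by
        push_cast; ring, Complex.exp_mul_I,
      Complex.cos_neg, Complex.sin_neg, ← Complex.ofReal_cos, ← Complex.ofReal_sin,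
      Real.cos_arccos hx.1 hx.2, Real.sin_arccos]; ring
  unfold Wz; rw [h1, h2]

theorem Wz_conj_eq (x : ℝ) (hx : x ∈ Set.Icc (-1:ℝ) 1) :
    (Wz x).map (starRingEnd ℂ) = !![(x:ℂ) - Complex.I * (Real.sqrt (1 - x^2) : ℝ), 0;
              0, (x:ℂ) + Complex.I * (Real.sqrt (1 - x^2) : ℝ)] := by
  rw [Wz_eq x hx]
  ext i j
  fin_cases i <;> fin_cases j <;>
    · simp [Matrix.map_apply, Complex.conj_ofReal]
      try ring

theorem expX_shift (t : ℝ) :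
    expX (t + Real.pi/2) = !![-((Real.sin t : ℝ) : ℂ), Complex.I * (Real.cos t : ℝ);
        Complex.I * (Real.cos t : ℝ), -((Real.sin t : ℝ) : ℂ)] := by
  unfold expX
  rw [Real.cos_add_pi_div_two, Real.sin_add_pi_div_two]
  push_cast
  rfl

theorem expX_pi_half :
    expX (Real.pi/2) = !![0, Complex.I; Complex.I, 0] := by
  unfold expX
  rw [Real.cos_pi_div_two, Real.sin_pi_div_two]
  norm_num

set_option maxHeartbeats 1600000 in
theorem step_lemma (x φ0 φ1 : ℝ) (hx : x ∈ Set.Icc (-1:ℝ) 1) :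
    expX φ0 * (Wz x).map (starRingEnd ℂ) * expX (φ1 + Real.pi/2) * Wz x * expX (Real.pi/2) * A1
      = (-1 : ℂ) • (A1 * expZ φ0 * Wmat x * expZ φ1 * Wmat x) := by
  rw [Wz_conj_eq x hx, Wz_eq x hx, expX_shift, expX_pi_half, expZ_eq φ0, expZ_eq φ1]
  ext i j
  fin_cases i <;> fin_cases j
  · simp [expX, Wmat, A1, Matrix.mul_apply, Fin.sum_univ_two]
    linear_combination ((x:ℂ)^2*Complex.cos (φ0:ℂ)*Complex.cos (φ1:ℂ)
      - 2*Complex.I*(x:ℂ)*((Real.sqrt (1-x^2):ℝ):ℂ)*Complex.cos (φ0:ℂ)*Complex.cos (φ1:ℂ)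
      + Complex.I*(x:ℂ)^2*Complex.sin (φ0:ℂ)*Complex.cos (φ1:ℂ)
      + Complex.I^2*((Real.sqrt (1-x^2):ℝ):ℂ)^2*Complex.cos (φ0:ℂ)*Complex.cos (φ1:ℂ)
      + 2*Complex.I^2*(x:ℂ)*((Real.sqrt (1-x^2):ℝ):ℂ)*Complex.sin (φ0:ℂ)*Complex.cos (φ1:ℂ)
      + Complex.I^3*((Real.sqrt (1-x^2):ℝ):ℂ)^2*Complex.sin (φ0:ℂ)*Complex.cos (φ1:ℂ)) * Complex.I_sq
  · simp [expX, Wmat, A1, Matrix.mul_apply, Fin.sum_univ_two]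
    linear_combination (-(x:ℂ)^2*Complex.cos (φ0:ℂ)*Complex.cos (φ1:ℂ)
      + 2*Complex.I*(x:ℂ)*((Real.sqrt (1-x^2):ℝ):ℂ)*Complex.cos (φ0:ℂ)*Complex.cos (φ1:ℂ)
      + Complex.I*(x:ℂ)^2*Complex.sin (φ0:ℂ)*Complex.cos (φ1:ℂ)
      - Complex.I^2*((Real.sqrt (1-x^2):ℝ):ℂ)^2*Complex.cos (φ0:ℂ)*Complex.cos (φ1:ℂ)
      + 2*Complex.I^2*(x:ℂ)*((Real.sqrt (1-x^2):ℝ):ℂ)*Complex.sin (φ0:ℂ)*Complex.cos (φ1:ℂ)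
      + Complex.I^3*((Real.sqrt (1-x^2):ℝ):ℂ)^2*Complex.sin (φ0:ℂ)*Complex.cos (φ1:ℂ)) * Complex.I_sq
  · simp [expX, Wmat, A1, Matrix.mul_apply, Fin.sum_univ_two]
    linear_combination ((x:ℂ)^2*Complex.cos (φ0:ℂ)*Complex.cos (φ1:ℂ)
      + 2*Complex.I*(x:ℂ)*((Real.sqrt (1-x^2):ℝ):ℂ)*Complex.cos (φ0:ℂ)*Complex.cos (φ1:ℂ)
      + Complex.I*(x:ℂ)^2*Complex.sin (φ0:ℂ)*Complex.cos (φ1:ℂ)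
      + Complex.I^2*((Real.sqrt (1-x^2):ℝ):ℂ)^2*Complex.cos (φ0:ℂ)*Complex.cos (φ1:ℂ)
      - 2*Complex.I^2*(x:ℂ)*((Real.sqrt (1-x^2):ℝ):ℂ)*Complex.sin (φ0:ℂ)*Complex.cos (φ1:ℂ)
      + Complex.I^3*((Real.sqrt (1-x^2):ℝ):ℂ)^2*Complex.sin (φ0:ℂ)*Complex.cos (φ1:ℂ)) * Complex.I_sq
  · simp [expX, Wmat, A1, Matrix.mul_apply, Fin.sum_univ_two]
    linear_combination ((x:ℂ)^2*Complex.cos (φ0:ℂ)*Complex.cos (φ1:ℂ)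
      + 2*Complex.I*(x:ℂ)*((Real.sqrt (1-x^2):ℝ):ℂ)*Complex.cos (φ0:ℂ)*Complex.cos (φ1:ℂ)
      - Complex.I*(x:ℂ)^2*Complex.sin (φ0:ℂ)*Complex.cos (φ1:ℂ)
      + Complex.I^2*((Real.sqrt (1-x^2):ℝ):ℂ)^2*Complex.cos (φ0:ℂ)*Complex.cos (φ1:ℂ)
      + 2*Complex.I^2*(x:ℂ)*((Real.sqrt (1-x^2):ℝ):ℂ)*Complex.sin (φ0:ℂ)*Complex.cos (φ1:ℂ)
      - Complex.I^3*((Real.sqrt (1-x^2):ℝ):ℂ)^2*Complex.sin (φ0:ℂ)*Complex.cos (φ1:ℂ)) * Complex.I_sq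

theorem ofFn_prod_two {M : Type*} [Monoid M] {n : ℕ} (f : Fin (n+2) → M) :
    (List.ofFn f).prod = f 0 * (f 1 * (List.ofFn fun j : Fin n => f j.succ.succ).prod) := by
  rw [List.ofFn_succ, List.prod_cons, List.ofFn_succ, List.prod_cons]
  rfl

theorem ofFn_prod_concat {M : Type*} [Monoid M] {n : ℕ} (f : Fin (n+1) → M) :
    (List.ofFn f).prod
      = (List.ofFn fun j : Fin n => f j.castSucc).prod * f (Fin.last n) := by
  rw [List.ofFn_succ']
  simp

theorem mod2ss (a : ℕ) : (a + 1 + 1) % 2 = a % 2 := by omega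
noncomputable def Vex (d : ℕ) (φ : Fin (d+1) → ℝ) (x : ℝ) : Matrix (Fin 2) (Fin 2) ℂ :=
  expX (φ 0) * (List.ofFn fun j : Fin d =>
      (if (j:ℕ) % 2 = 0 then (Wz x).map (starRingEnd ℂ) else Wz x)
        * expX (φ j.succ + Real.pi/2)).prod

theorem qspW_peel (m : ℕ) (φ : Fin (2*m+3) → ℝ) (x : ℝ) :
    qspW (2*m+2) φ x = expZ (φ 0) * (Wmat x * (expZ (φ (0 : Fin (2*m+2)).succ) * (Wmat x
      * qspW (2*m) (fun k => φ k.succ.succ) x))) := by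
  unfold qspW
  rw [ofFn_prod_two]
  have hidx : (1 : Fin (2*m+2)).succ = ((0 : Fin (2*m+1)).succ.succ) := by ext; simp
  simp only [hidx, mul_assoc]

theorem Vex_peel (m : ℕ) (φ : Fin (2*m+3) → ℝ) (x : ℝ) :
    Vex (2*m+2) φ x
      = expX (φ 0) * ((Wz x).map (starRingEnd ℂ)
        * (expX (φ (0 : Fin (2*m+2)).succ + Real.pi/2) * (Wz x
        * (expX (Real.pi/2) * Vex (2*m) (fun k => φ k.succ.succ) x)))) := by
  unfold Vex
  rw [ofFn_prod_two]
  have hidx : (1 : Fin (2*m+2)).succ = ((0 : Fin (2*m+1)).succ.succ) := by ext; simp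
  have hsplit : expX (φ ((1 : Fin (2*m+2)).succ) + Real.pi/2)
      = expX (Real.pi/2) * expX (φ ((0 : Fin (2*m+1)).succ.succ)) := by
    rw [expX_mul, hidx]; ring_nf
  simp only [Fin.val_succ, Fin.val_zero, Fin.val_one, mod2ss, Nat.zero_mod, if_pos, hsplit,
    mul_assoc]
  norm_num

theorem Vkey (m : ℕ) : ∀ (φ : Fin (2*m+1) → ℝ) (x : ℝ), x ∈ Set.Icc (-1:ℝ) 1 →
    Vex (2*m) φ x = (((-1:ℂ)^m)/2) • (A1 * qspW (2*m) φ x * A2) := by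
  induction m with
  | zero =>
    intro φ x _
    show Vex 0 φ x = (((-1:ℂ)^0)/2) • (A1 * qspW 0 φ x * A2)
    simp [Vex, qspW]
    rw [base_lemma (φ 0)]
    norm_num
  | succ m IH =>
    intro φ x hx
    show Vex (2*m+2) φ x = (((-1:ℂ)^(m+1))/2) • (A1 * qspW (2*m+2) φ x * A2)
    rw [Vex_peel, qspW_peel, IH (fun k => φ k.succ.succ) x hx]
    simp only [mul_smul_comm, smul_mul_assoc, smul_smul, ← mul_assoc]
    rw [show expX (φ 0) * (Wz x).map (starRingEnd ℂ)
          * expX (φ (0 : Fin (2*m+2)).succ + Real.pi/2) * Wz x * expX (Real.pi/2) * A1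
        = (-1 : ℂ) • (A1 * expZ (φ 0) * Wmat x * expZ (φ (0 : Fin (2*m+2)).succ) * Wmat x)
      from step_lemma x (φ 0) (φ (0 : Fin (2*m+2)).succ) hx]
    simp only [smul_mul_assoc, smul_smul]
    congr 1
    push_cast
    ring

theorem expX_pi_quarter :
    expX (Real.pi/4) = !![((Real.sqrt 2:ℝ):ℂ)/2, Complex.I*(((Real.sqrt 2:ℝ):ℂ)/2);
      Complex.I*(((Real.sqrt 2:ℝ):ℂ)/2), ((Real.sqrt 2:ℝ):ℂ)/2] := by
  unfold expX
  rw [Real.cos_pi_div_four, Real.sin_pi_div_four]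
  ext i j
  fin_cases i <;> fin_cases j <;> · push_cast; try ring

theorem expX_neg_pi_quarter :
    expX (-(Real.pi/4)) = !![((Real.sqrt 2:ℝ):ℂ)/2, -(Complex.I*(((Real.sqrt 2:ℝ):ℂ)/2));
      -(Complex.I*(((Real.sqrt 2:ℝ):ℂ)/2)), ((Real.sqrt 2:ℝ):ℂ)/2] := by
  unfold expX
  rw [Real.cos_neg, Real.sin_neg, Real.cos_pi_div_four, Real.sin_pi_div_four]
  ext i j
  fin_cases i <;> fin_cases j <;> · push_cast; try ring

theorem qspWz_decomp (n : ℕ) (φ : Fin (n+2) → ℝ) (x : ℝ) :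
    qspWz (n+1) (fun j => φ j + (if (j:ℕ) = 0 ∨ (j:ℕ) = n+1 then Real.pi/4 else Real.pi/2)) x
      = expX (Real.pi/4) * (Vex (n+1) φ x * expX (-(Real.pi/4))) := by
  unfold qspWz Vex
  rw [ofFn_prod_concat, ofFn_prod_concat]
  have hfun : ∀ j : Fin n,
      expX (φ (j.castSucc).succ + (if ((j.castSucc).succ : ℕ) = 0 ∨ ((j.castSucc).succ : ℕ) = n+1
          then Real.pi/4 else Real.pi/2))
        = expX (φ (j.castSucc).succ + Real.pi/2) := by
    intro j
    congr 1
    have hj := j.isLt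
    rw [if_neg (by simp only [Fin.val_succ, Fin.coe_castSucc]; omega)]
  have hhead : expX (φ 0 + (if ((0 : Fin (n+2)) : ℕ) = 0 ∨ ((0 : Fin (n+2)) : ℕ) = n+1
      then Real.pi/4 else Real.pi/2)) = expX (Real.pi/4) * expX (φ 0) := by
    rw [if_pos (Or.inl (Fin.val_zero _)), expX_mul, add_comm]
  have hlast : expX (φ (Fin.last n).succ + (if (((Fin.last n).succ : Fin (n+2)) : ℕ) = 0
        ∨ (((Fin.last n).succ : Fin (n+2)) : ℕ) = n+1 then Real.pi/4 else Real.pi/2))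
      = expX (φ (Fin.last n).succ + Real.pi/2) * expX (-(Real.pi/4)) := by
    rw [if_pos (Or.inr (by simp [Fin.val_succ, Fin.val_last])), expX_mul]
    congr 1
    ring
  simp only [hfun, hhead, hlast, mul_assoc]


/-- Assuming symmetric QSP existence in the `W`-convention, one obtains symmetric QSP
in the `W_z`-convention with real polynomial target `F` on both diagonal entries. -/
theorem stmt4
    (hQSP : ∀ (d : ℕ) (F : Polynomial ℝ), F.natDegree = d →
      (∀ x : ℝ, F.eval (-x) = (-1 : ℝ) ^ d * F.eval x) →
      (∀ x ∈ Set.Icc (-1 : ℝ) 1, |F.eval x| ≤ 1) →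
      ∃ (G Q : Polynomial ℝ) (φ : Fin (d + 1) → ℝ),
        (∀ j : Fin (d + 1), φ j = φ j.rev) ∧
        ∀ x ∈ Set.Icc (-1 : ℝ) 1,
          qspW d φ x =
            !![(F.eval x : ℝ) + Complex.I * (G.eval x : ℝ),
                Complex.I * (Q.eval x : ℝ) * (Real.sqrt (1 - x ^ 2) : ℝ);
               Complex.I * (Q.eval x : ℝ) * (Real.sqrt (1 - x ^ 2) : ℝ),
                (F.eval x : ℝ) - Complex.I * (G.eval x : ℝ)]) :
    ∀ (d : ℕ) (F : Polynomial ℝ), F.natDegree = d →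
      (∀ x : ℝ, F.eval (-x) = F.eval x) →
      (∀ x ∈ Set.Icc (-1 : ℝ) 1, |F.eval x| ≤ 1) →
      ∃ (G Q : Polynomial ℝ) (φ : Fin (d + 1) → ℝ),
        (∀ j : Fin (d + 1), φ j = φ j.rev) ∧
        ∀ x ∈ Set.Icc (-1 : ℝ) 1,
          qspWz d φ x =
            !![((F.eval x : ℝ) : ℂ),
                -((Q.eval x : ℝ) * (Real.sqrt (1 - x ^ 2) : ℝ)) + Complex.I * (G.eval x : ℝ);
               (Q.eval x : ℝ) * (Real.sqrt (1 - x ^ 2) : ℝ) + Complex.I * (G.eval x : ℝ),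
                ((F.eval x : ℝ) : ℂ)] := by
  intro d F hdeg heven hbound
  rcases Nat.even_or_odd d with hev | hodd
  · -- d even
    obtain ⟨m, hm⟩ := hev
    cases m with
    | zero =>
      -- d = 0
      have hd0 : d = 0 := by omega
      subst hd0
      obtain ⟨G, Q, φ, hsym, hmat⟩ := hQSP 0 F hdeg (fun x => by simpa using heven x) hbound
      refine ⟨G, Q, φ, hsym, fun x hx => ?_⟩
      have h := hmat x hx
      rw [qspW] at h
      simp only [List.ofFn_zero, List.prod_nil, mul_one] at h
      rw [expZ_eq] at h
      have h00 := congrFun (congrFun h 0) 0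
      have h01 := congrFun (congrFun h 0) 1
      simp only [Matrix.of_apply, Matrix.cons_val', Matrix.cons_val_zero, Matrix.cons_val_one, Matrix.head_cons,
        Matrix.empty_val', Matrix.cons_val_fin_one, Matrix.head_fin_const] at h00 h01
      have hcos : Real.cos (φ 0) = F.eval x := by
        have := congrArg Complex.re h00; simpa [Complex.cos_ofReal_re] using this
      have hsin : Real.sin (φ 0) = G.eval x := by
        have := congrArg Complex.im h00; simpa [Complex.sin_ofReal_re] using this
      have hQS : ((Q.eval x:ℝ):ℂ) * ((Real.sqrt (1-x^2):ℝ):ℂ) = 0 := by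
        have h01' := h01.symm
        rw [mul_assoc] at h01'
        rcases mul_eq_zero.mp h01' with hI | hrest
        · exact absurd hI Complex.I_ne_zero
        · exact hrest
      rw [qspWz]
      simp only [List.ofFn_zero, List.prod_nil, mul_one]
      unfold expX
      rw [hcos, hsin]
      ext i j
      fin_cases i <;> fin_cases j <;>
        simp only [Fin.mk_zero, Fin.mk_one, Matrix.of_apply, Matrix.cons_val', Matrix.cons_val_zero,
          Matrix.cons_val_one, Matrix.head_cons, Matrix.empty_val', Matrix.cons_val_fin_one,
          Matrix.head_fin_const]
      · linear_combination hQS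
      · linear_combination -hQS
    | succ k =>
      have hd2 : d = 2*k+2 := by omega
      subst hd2
      obtain ⟨G, Q, φ, hsym, hmat⟩ :=
        hQSP (2*k+2) (Polynomial.C ((-1:ℝ)^(k+1)) * F)
          (by
            rw [Polynomial.natDegree_C_mul (pow_ne_zero _ (by norm_num))]
            exact hdeg)
          (by
            intro x
            have h1 : ((-1:ℝ))^(2*k+2) = 1 := by
              rw [show 2*k+2 = 2*(k+1) by ring, pow_mul]; norm_num
            simp [heven x, h1])
          (by
            intro x hx
            have := hbound x hx
            simp only [Polynomial.eval_mul, Polynomial.eval_C, abs_mul, _root_.abs_pow,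
              abs_neg, abs_one, one_pow, one_mul]
            exact this)
      refine ⟨Polynomial.C ((-1:ℝ)^(k+1)) * G, Polynomial.C ((-1:ℝ)^(k+1)) * Q,
        (fun j : Fin (2*k+2+1) => φ j +
          (if (j:ℕ) = 0 ∨ (j:ℕ) = 2*k+1+1 then Real.pi/4 else Real.pi/2)), ?_, ?_⟩
      · -- symmetry
        intro j
        have hc : (((j.rev : Fin (2*k+2+1)):ℕ) = 0 ∨ ((j.rev : Fin (2*k+2+1)):ℕ) = 2*k+1+1)
            ↔ ((j:ℕ) = 0 ∨ (j:ℕ) = 2*k+1+1) := by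
          rw [Fin.val_rev]
          have := j.isLt
          omega
        simp only
        rw [hsym j]
        congr 1
        exact if_congr hc.symm rfl rfl
      · intro x hx
        have hdec : qspWz (2*k+2)
            (fun j : Fin (2*k+2+1) => φ j +
              (if (j:ℕ) = 0 ∨ (j:ℕ) = 2*k+1+1 then Real.pi/4 else Real.pi/2)) x
            = expX (Real.pi/4) * (Vex (2*k+2) φ x * expX (-(Real.pi/4))) :=
          qspWz_decomp (2*k+1) φ x
        have hvk : Vex (2*k+2) φ x
            = (((-1:ℂ)^(k+1))/2) • (A1 * qspW (2*k+2) φ x * A2) := Vkey (k+1) φ x hx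
        rw [hdec, hvk, hmat x hx]
        rw [expX_pi_quarter, expX_neg_pi_quarter]
        simp only [Polynomial.eval_mul, Polynomial.eval_C]
        push_cast
        set E : ℂ := ((-1:ℂ))^(k+1) with hE
        have hE2 : E^2 = 1 := by
          rw [hE, ← pow_mul, mul_comm, pow_mul]
          norm_num
        have hr2 : ((Real.sqrt 2:ℝ):ℂ)^2 = 2 := by
          rw [← Complex.ofReal_pow, Real.sq_sqrt (by norm_num : (0:ℝ) ≤ 2)]
          norm_num
        ext i j
        fin_cases i <;> fin_cases j <;>
          simp only [A1, A2, Fin.mk_zero, Fin.mk_one, Matrix.smul_apply, smul_eq_mul,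
            Matrix.mul_apply, Fin.sum_univ_two, Matrix.of_apply, Matrix.cons_val', Matrix.cons_val_zero,
            Matrix.cons_val_one, Matrix.head_cons, Matrix.empty_val', Matrix.cons_val_fin_one,
            Matrix.head_fin_const]
        · linear_combination
            ((-1/4)*((Real.sqrt 2:ℝ):ℂ)^2*E^2*((F.eval x:ℝ):ℂ)
              + (-1/4)*Complex.I*((Real.sqrt 2:ℝ):ℂ)^2*E*((Q.eval x:ℝ):ℂ)*((Real.sqrt (1-x^2):ℝ):ℂ)) * Complex.I_sq
            + ((1/2)*E^2*((F.eval x:ℝ):ℂ)) * hr2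
            + (((F.eval x:ℝ):ℂ)) * hE2
        · linear_combination
            ((1/2)*((Real.sqrt 2:ℝ):ℂ)^2*E*((Q.eval x:ℝ):ℂ)*((Real.sqrt (1-x^2):ℝ):ℂ)
              + (-1/4)*Complex.I*((Real.sqrt 2:ℝ):ℂ)^2*E*((G.eval x:ℝ):ℂ)) * Complex.I_sq
            + ((-1/2)*E*((Q.eval x:ℝ):ℂ)*((Real.sqrt (1-x^2):ℝ):ℂ)
              + (1/2)*Complex.I*E*((G.eval x:ℝ):ℂ)) * hr2
        · linear_combination
            ((-1/2)*((Real.sqrt 2:ℝ):ℂ)^2*E*((Q.eval x:ℝ):ℂ)*((Real.sqrt (1-x^2):ℝ):ℂ)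
              + (-1/4)*Complex.I*((Real.sqrt 2:ℝ):ℂ)^2*E*((G.eval x:ℝ):ℂ)) * Complex.I_sq
            + ((1/2)*E*((Q.eval x:ℝ):ℂ)*((Real.sqrt (1-x^2):ℝ):ℂ)
              + (1/2)*Complex.I*E*((G.eval x:ℝ):ℂ)) * hr2
        · linear_combination
            ((-1/4)*((Real.sqrt 2:ℝ):ℂ)^2*E^2*((F.eval x:ℝ):ℂ)
              + (1/4)*Complex.I*((Real.sqrt 2:ℝ):ℂ)^2*E*((Q.eval x:ℝ):ℂ)*((Real.sqrt (1-x^2):ℝ):ℂ)) * Complex.I_sq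
            + ((1/2)*E^2*((F.eval x:ℝ):ℂ)) * hr2
            + (((F.eval x:ℝ):ℂ)) * hE2
  · -- d odd: impossible
    exfalso
    have hcomp : F.comp (-Polynomial.X) = F :=
      Polynomial.funext fun x => by simp [Polynomial.eval_comp, heven]
    have hlc := congrArg Polynomial.leadingCoeff hcomp
    rw [Polynomial.comp_neg_X_leadingCoeff_eq, hdeg, hodd.neg_one_pow] at hlc
    have hF0 : F = 0 := Polynomial.leadingCoeff_eq_zero.mp (by linarith)
    rw [hF0, Polynomial.natDegree_zero] at hdeg
    exact (Nat.not_even_iff_odd.mpr hodd) (hdeg ▸ Even.zero)
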